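/- Suppose the primal feasible set X(b) and the dual feasible set Y(c) are both nonempty. If the set L*_p(K* × C*) = {(A* y − w, ⟨b,y⟩) : y ∈ K*, w ∈ C*} is closed in E × ℝ, then the dual is solvable and there is zero duality gap: there exists y* ∈ Y(c) with ⟨b, y*⟩ = D* and P* = D*. Symmetrically, if the set L*_d(C × K) = {(A x + s, ⟨c,x⟩) : x ∈ C, s ∈ K} is closed in E' × ℝ, then the primal is solvable (some x* ∈ X(b) attains P*) and P* = D*. -/

import Mathlib

open RealInnerProductSpace Set Pointwise

variable {E E' : Type*}
  [NormedAddCommGroup E] [InnerProductSpace ℝ E] [FiniteDimensional ℝ E]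
  [NormedAddCommGroup E'] [InnerProductSpace ℝ E'] [FiniteDimensional ℝ E']

/-- A nonempty closed convex cone containing `0`. -/
structure IsClosedConvexCone {F : Type*} [NormedAddCommGroup F] [InnerProductSpace ℝ F]
    (K : Set F) : Prop where
  closed : IsClosed K
  convex : Convex ℝ K
  smul_mem : ∀ ⦃x⦄, x ∈ K → ∀ ⦃t : ℝ⦄, 0 ≤ t → t • x ∈ K
  zero_mem : (0 : F) ∈ K

/-- The dual cone `S* = {y : ⟨x,y⟩ ≥ 0 ∀ x ∈ S}`. -/
def dualCone {F : Type*} [NormedAddCommGroup F] [InnerProductSpace ℝ F] (S : Set F) : Set F :=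
  {y | ∀ x ∈ S, 0 ≤ ⟪x, y⟫}

/-- The polar cone `S° = {y : ⟨x,y⟩ ≤ 0 ∀ x ∈ S}`. -/
def polarCone {F : Type*} [NormedAddCommGroup F] [InnerProductSpace ℝ F] (S : Set F) : Set F :=
  {y | ∀ x ∈ S, ⟪x, y⟫ ≤ 0}

/-- Primal feasible set `X(b) = {x ∈ C : b - A x ∈ K}`. -/
def Xfeas (A : E →ₗ[ℝ] E') (K : Set E') (C : Set E) (b : E') : Set E :=
  {x | x ∈ C ∧ b - A x ∈ K}

/-- Dual feasible set `Y(c) = {y ∈ K* : A* y - c ∈ C*}`. -/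
def Yfeas (A : E →ₗ[ℝ] E') (K : Set E') (C : Set E) (c : E) : Set E' :=
  {y | y ∈ dualCone K ∧ LinearMap.adjoint A y - c ∈ dualCone C}

/-- Primal optimal value `P* = sup {⟨c,x⟩ : x ∈ X(b)}`. -/
noncomputable def Pval (A : E →ₗ[ℝ] E') (K : Set E') (C : Set E) (b : E') (c : E) : ℝ :=
  sSup ((fun x => ⟪c, x⟫) '' Xfeas A K C b)

/-- Dual optimal value `D* = inf {⟨b,y⟩ : y ∈ Y(c)}`. -/
noncomputable def Dval (A : E →ₗ[ℝ] E') (K : Set E') (C : Set E) (b : E') (c : E) : ℝ :=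
  sInf ((fun y => ⟪b, y⟫) '' Yfeas A K C c)

/-- Recession cone of the primal feasible region: `{x ∈ C : A x ∈ -K}`. -/
def recXSet (A : E →ₗ[ℝ] E') (K : Set E') (C : Set E) : Set E :=
  {x | x ∈ C ∧ A x ∈ -K}

/-- Recession cone of the dual feasible region: `{y ∈ K* : A* y ∈ C*}`. -/
def recYSet (A : E →ₗ[ℝ] E') (K : Set E') (C : Set E) : Set E' :=
  {y | y ∈ dualCone K ∧ LinearMap.adjoint A y ∈ dualCone C}

/-- `X(b)` is almost feasible. -/
def AlmostFeasX (A : E →ₗ[ℝ] E') (K : Set E') (C : Set E) (b : E') : Prop :=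
  ∀ ε : ℝ, 0 < ε → ∃ bε : E', ‖bε‖ ≤ ε ∧ (Xfeas A K C (b + bε)).Nonempty

/-- `Y(c)` is almost feasible. -/
def AlmostFeasY (A : E →ₗ[ℝ] E') (K : Set E') (C : Set E) (c : E) : Prop :=
  ∀ ε : ℝ, 0 < ε → ∃ cε : E, ‖cε‖ ≤ ε ∧ (Yfeas A K C (c + cε)).Nonempty


section Aux

variable {E E' : Type*}
  [NormedAddCommGroup E] [InnerProductSpace ℝ E] [FiniteDimensional ℝ E]
  [NormedAddCommGroup E'] [InnerProductSpace ℝ E'] [FiniteDimensional ℝ E']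

lemma zero_mem_dualCone' {F : Type*} [NormedAddCommGroup F] [InnerProductSpace ℝ F]
    (S : Set F) : (0:F) ∈ dualCone S := fun x _ => by simp

lemma smul_mem_dualCone' {F : Type*} [NormedAddCommGroup F] [InnerProductSpace ℝ F]
    {S : Set F} {y : F} (hy : y ∈ dualCone S) {t : ℝ} (ht : 0 ≤ t) : t • y ∈ dualCone S :=
  fun x hx => by rw [real_inner_smul_right]; exact mul_nonneg ht (hy x hx)

lemma add_mem_dualCone' {F : Type*} [NormedAddCommGroup F] [InnerProductSpace ℝ F]
    {S : Set F} {y z : F} (hy : y ∈ dualCone S) (hz : z ∈ dualCone S) : y + z ∈ dualCone S :=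
  fun x hx => by rw [inner_add_right]; exact add_nonneg (hy x hx) (hz x hx)

lemma dualCone_eq' {F : Type*} [NormedAddCommGroup F] [InnerProductSpace ℝ F] (S : Set F) :
    dualCone S = ⋂ x ∈ S, {y | 0 ≤ ⟪x, y⟫} := by
  ext y; simp [dualCone]

lemma isClosedConvexCone_dualCone {F : Type*} [NormedAddCommGroup F] [InnerProductSpace ℝ F]
    (S : Set F) : IsClosedConvexCone (dualCone S) where
  closed := by
    rw [dualCone_eq']
    exact isClosed_biInter fun x _ => isClosed_le continuous_const (continuous_const.inner continuous_id)
  convex := by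
    intro y hy z hz a b ha hb _ x hx
    rw [inner_add_right, real_inner_smul_right, real_inner_smul_right]
    exact add_nonneg (mul_nonneg ha (hy x hx)) (mul_nonneg hb (hz x hx))
  smul_mem := fun x hx t ht => smul_mem_dualCone' hx ht
  zero_mem := zero_mem_dualCone' S

/-- Build a `ConvexCone` from an `IsClosedConvexCone`. -/
def IsClosedConvexCone.toCone {F : Type*} [NormedAddCommGroup F] [InnerProductSpace ℝ F]
    {K : Set F} (hK : IsClosedConvexCone K) : ConvexCone ℝ F where
  carrier := K
  smul_mem' := fun c hc x hx => hK.smul_mem hx hc.le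
  add_mem' := fun x hx y hy => by
    have h := hK.convex hx hy (by norm_num : (0:ℝ) ≤ 1/2) (by norm_num : (0:ℝ) ≤ 1/2) (by norm_num)
    have h2 := hK.smul_mem h (by norm_num : (0:ℝ) ≤ 2)
    rwa [smul_add, smul_smul, smul_smul, show (2:ℝ) * (1/2) = 1 by norm_num, one_smul,
      one_smul] at h2

lemma bipolar' {F : Type*} [NormedAddCommGroup F] [InnerProductSpace ℝ F] [CompleteSpace F]
    {K : Set F} (hK : IsClosedConvexCone K) : dualCone (dualCone K) = K := by
  apply Set.Subset.antisymm
  · intro z hz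
    by_contra hzK
    obtain ⟨f, u, hfz, hfK⟩ := geometric_hahn_banach_point_closed hK.convex hK.closed hzK
    have hu0 : u < 0 := by
      have := hfK 0 hK.zero_mem
      rw [map_zero] at this; exact this
    have hfnn : ∀ k ∈ K, 0 ≤ f k := by
      intro k hk
      by_contra hneg
      push_neg at hneg
      have ht : 0 < u / f k := div_pos_of_neg_of_neg hu0 hneg
      have := hfK _ (hK.smul_mem hk ht.le)
      rw [map_smul, smul_eq_mul, div_mul_cancel₀ u (ne_of_lt hneg)] at this
      exact lt_irrefl u this
    set y := (InnerProductSpace.toDual ℝ F).symm f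
    have hy : ∀ v, ⟪y, v⟫ = f v := fun v => InnerProductSpace.toDual_symm_apply
    have hyd : y ∈ dualCone K := fun k hk => by rw [real_inner_comm, hy]; exact hfnn k hk
    have := hz y hyd
    rw [hy] at this
    linarith
  · intro k hk y hy
    rw [real_inner_comm]; exact hy k hk

lemma weak_dual (A : E →ₗ[ℝ] E') (K : Set E') (C : Set E) (b : E') (c : E)
    {x : E} {y : E'} (hx : x ∈ Xfeas A K C b) (hy : y ∈ Yfeas A K C c) :
    ⟪c, x⟫ ≤ ⟪b, y⟫ := by
  have h1 : 0 ≤ ⟪b - A x, y⟫ := hy.1 _ hx.2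
  have h2 : 0 ≤ ⟪x, LinearMap.adjoint A y - c⟫ := hy.2 x hx.1
  rw [inner_sub_left] at h1
  rw [inner_sub_right, LinearMap.adjoint_inner_right] at h2
  have h3 : ⟪A x, y⟫ = ⟪y, A x⟫ := real_inner_comm _ _
  have h4 : ⟪x, c⟫ = ⟪c, x⟫ := real_inner_comm _ _
  linarith

lemma core (A : E →ₗ[ℝ] E') (K : Set E') (C : Set E)
    (hK : IsClosedConvexCone K) (hC : IsClosedConvexCone C) (b : E') (c : E)
    (hXne : (Xfeas A K C b).Nonempty) (hYne : (Yfeas A K C c).Nonempty)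
    (hcl : IsClosed {p : E × ℝ | ∃ y ∈ dualCone K, ∃ w ∈ dualCone C,
        p = (LinearMap.adjoint A y - w, ⟪b, y⟫)}) :
    (∃ y ∈ Yfeas A K C c, ⟪b, y⟫ = Dval A K C b c) ∧
      Pval A K C b c = Dval A K C b c := by
  obtain ⟨x₀, hx₀⟩ := hXne
  obtain ⟨y₀, hy₀⟩ := hYne
  set M : Set (E × ℝ) := {p : E × ℝ | ∃ y ∈ dualCone K, ∃ w ∈ dualCone C,
      p = (LinearMap.adjoint A y - w, ⟪b, y⟫)} with hM
  have slice : ∀ t : ℝ, (c, t) ∈ M ↔ t ∈ (fun y => ⟪b, y⟫) '' Yfeas A K C c := by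
    intro t
    constructor
    · rintro ⟨y, hy, w, hw, hp⟩
      simp only [Prod.mk.injEq] at hp
      refine ⟨y, ⟨hy, ?_⟩, hp.2.symm⟩
      have : LinearMap.adjoint A y - c = w := by
        rw [hp.1]; abel
      rwa [this]
    · rintro ⟨y, hy, rfl⟩
      exact ⟨y, hy.1, LinearMap.adjoint A y - c, hy.2, by simp⟩
  set S := (fun y => ⟪b, y⟫) '' Yfeas A K C c with hS
  have hSne : S.Nonempty := ⟨_, y₀, hy₀, rfl⟩
  have hSbdd : BddBelow S := by
    refine ⟨⟪c, x₀⟫, ?_⟩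
    rintro t ⟨y, hy, rfl⟩
    exact weak_dual A K C b c hx₀ hy
  have hScl : IsClosed S := by
    have : S = (fun t : ℝ => ((c : E), t)) ⁻¹' M := by
      ext t; rw [Set.mem_preimage, slice t]
    rw [this]
    exact hcl.preimage (by fun_prop)
  have hDmem : Dval A K C b c ∈ S := hScl.csInf_mem hSne hSbdd
  obtain ⟨ystar, hystar, hystarval⟩ := hDmem
  refine ⟨⟨ystar, hystar, hystarval⟩, ?_⟩
  set D := Dval A K C b c with hD
  set P := Pval A K C b c with hP
  have hPimgne : ((fun x => ⟪c, x⟫) '' Xfeas A K C b).Nonempty := ⟨_, x₀, hx₀, rfl⟩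
  have hPbdd : BddAbove ((fun x => ⟪c, x⟫) '' Xfeas A K C b) := by
    refine ⟨⟪b, y₀⟫, ?_⟩
    rintro t ⟨x, hx, rfl⟩
    exact weak_dual A K C b c hx hy₀
  have hPD : P ≤ D := by
    rw [hP, Pval]
    apply csSup_le hPimgne
    rintro t ⟨x, hx, rfl⟩
    rw [hD, Dval]
    apply le_csInf hSne
    rintro u ⟨y, hy, rfl⟩
    exact weak_dual A K C b c hx hy
  by_contra hne
  have hPltD : P < D := lt_of_le_of_ne hPD hne
  set γ := (P + D) / 2 with hγ
  have hPγ : P < γ := by rw [hγ]; linarith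
  have hγD : γ < D := by rw [hγ]; linarith
  have hγM : (c, γ) ∉ M := by
    intro hmem
    have : D ≤ γ := csInf_le hSbdd ((slice γ).mp hmem)
    linarith
  have hMcv : Convex ℝ M := by
    rintro p ⟨y1, hy1, w1, hw1, rfl⟩ q ⟨y2, hy2, w2, hw2, rfl⟩ a b' ha hb hab
    refine ⟨a • y1 + b' • y2,
      add_mem_dualCone' (smul_mem_dualCone' hy1 ha) (smul_mem_dualCone' hy2 hb),
      a • w1 + b' • w2,
      add_mem_dualCone' (smul_mem_dualCone' hw1 ha) (smul_mem_dualCone' hw2 hb), ?_⟩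
    simp only [Prod.smul_mk, Prod.mk_add_mk, map_add, map_smul, inner_add_right,
      real_inner_smul_right, smul_eq_mul]
    rw [Prod.mk.injEq]
    exact ⟨by module, by ring⟩
  have hM0 : ((0 : E), (0 : ℝ)) ∈ M := by
    refine ⟨0, zero_mem_dualCone' _, 0, zero_mem_dualCone' _, ?_⟩
    simp
  have hMcone : ∀ p ∈ M, ∀ t : ℝ, 0 ≤ t → t • p ∈ M := by
    rintro p ⟨y, hy, w, hw, rfl⟩ t ht
    refine ⟨t • y, smul_mem_dualCone' hy ht, t • w, smul_mem_dualCone' hw ht, ?_⟩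
    simp only [Prod.smul_mk, map_smul, real_inner_smul_right, smul_eq_mul, smul_sub]
  obtain ⟨f, u, hfp, hfM⟩ := geometric_hahn_banach_point_closed hMcv hcl hγM
  have hu0 : u < 0 := by
    have := hfM _ hM0
    rw [show ((0 : E), (0 : ℝ)) = (0 : E × ℝ) from rfl, map_zero] at this
    exact this
  have hfnn : ∀ p ∈ M, 0 ≤ f p := by
    intro p hp
    by_contra hneg
    push_neg at hneg
    have ht : 0 < u / f p := div_pos_of_neg_of_neg hu0 hneg
    have := hfM _ (hMcone p hp _ ht.le)
    rw [map_smul, smul_eq_mul, div_mul_cancel₀ u (ne_of_lt hneg)] at this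
    exact lt_irrefl u this
  set x : E := (InnerProductSpace.toDual ℝ E).symm (f.comp (ContinuousLinearMap.inl ℝ E ℝ)) with hx
  set s : ℝ := f (0, 1) with hs
  have hfeq : ∀ (e : E) (t : ℝ), f (e, t) = ⟪x, e⟫ + t * s := by
    intro e t
    have h1 : ⟪x, e⟫ = f (e, 0) := by
      rw [hx, InnerProductSpace.toDual_symm_apply]
      rfl
    have h2 : (e, t) = (e, (0:ℝ)) + t • ((0:E), (1:ℝ)) := by
      simp [Prod.ext_iff]
    rw [h2, map_add, map_smul, h1, smul_eq_mul]
  have hsep : ∀ y ∈ dualCone K, ∀ w ∈ dualCone C,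
      0 ≤ ⟪x, LinearMap.adjoint A y - w⟫ + ⟪b, y⟫ * s := by
    intro y hy w hw
    have := hfnn _ ⟨y, hy, w, hw, rfl⟩
    rwa [hfeq] at this
  have hpt : ⟪x, c⟫ + γ * s < 0 := by
    have := hfp
    rw [hfeq] at this
    linarith
  have hspos : 0 < s := by
    have h1 := hsep ystar hystar.1 (LinearMap.adjoint A ystar - c) hystar.2
    have h2 : LinearMap.adjoint A ystar - (LinearMap.adjoint A ystar - c) = c := by abel
    have hbv : ⟪b, ystar⟫ = D := hystarval
    rw [h2, hbv] at h1
    by_contra hsle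
    push_neg at hsle
    have hnp : (D - γ) * s ≤ 0 :=
      mul_nonpos_of_nonneg_of_nonpos (by linarith) hsle
    nlinarith
  set x' : E := (-s⁻¹) • x with hx'
  have hx'C : x' ∈ C := by
    rw [← bipolar' hC]
    intro w hw
    have h1 := hsep 0 (zero_mem_dualCone' _) w hw
    simp only [map_zero, zero_sub, inner_neg_right, inner_zero_right, inner_zero_left,
      zero_mul, add_zero] at h1
    rw [hx', real_inner_smul_right]
    have hwx : ⟪w, x⟫ ≤ 0 := by rw [real_inner_comm]; linarith
    have hsi : 0 < s⁻¹ := inv_pos.mpr hspos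
    nlinarith
  have hx'K : b - A x' ∈ K := by
    rw [← bipolar' hK]
    intro y hy
    have h1 := hsep y hy 0 (zero_mem_dualCone' _)
    simp only [sub_zero] at h1
    rw [LinearMap.adjoint_inner_right] at h1
    rw [real_inner_comm, inner_sub_left, hx', map_smul, real_inner_smul_left]
    have hsi : 0 < s⁻¹ := inv_pos.mpr hspos
    have h2 : 0 ≤ s⁻¹ * (⟪A x, y⟫ + ⟪b, y⟫ * s) := mul_nonneg hsi.le h1
    rw [mul_add] at h2
    have h3 : s⁻¹ * (⟪b, y⟫ * s) = ⟪b, y⟫ := by field_simp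
    linarith
  have hx'feas : x' ∈ Xfeas A K C b := ⟨hx'C, hx'K⟩
  have hx'val : γ < ⟪c, x'⟫ := by
    rw [hx', real_inner_smul_right, real_inner_comm]
    have hsi : 0 < s⁻¹ := inv_pos.mpr hspos
    have h2 : s⁻¹ * (⟪x, c⟫ + γ * s) < s⁻¹ * 0 := mul_lt_mul_of_pos_left hpt hsi
    rw [mul_zero, mul_add] at h2
    have h3 : s⁻¹ * (γ * s) = γ := by field_simp
    linarith
  have : ⟪c, x'⟫ ≤ P := le_csSup hPbdd ⟨x', hx'feas, rfl⟩
  linarith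

end Aux

theorem stmt0 (A : E →ₗ[ℝ] E') (K : Set E') (C : Set E)
    (hK : IsClosedConvexCone K) (hC : IsClosedConvexCone C) (b : E') (c : E)
    (hXne : (Xfeas A K C b).Nonempty) (hYne : (Yfeas A K C c).Nonempty) :
    (IsClosed {p : E × ℝ | ∃ y ∈ dualCone K, ∃ w ∈ dualCone C,
        p = (LinearMap.adjoint A y - w, ⟪b, y⟫)} →
      (∃ y ∈ Yfeas A K C c, ⟪b, y⟫ = Dval A K C b c) ∧
        Pval A K C b c = Dval A K C b c) ∧
    (IsClosed {p : E' × ℝ | ∃ x ∈ C, ∃ s ∈ K, p = (A x + s, ⟪c, x⟫)} →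
      (∃ x ∈ Xfeas A K C b, ⟪c, x⟫ = Pval A K C b c) ∧
        Pval A K C b c = Dval A K C b c) := by
  constructor
  · intro hcl
    exact core A K C hK hC b c hXne hYne hcl
  · intro hcl
    -- flip the problem
    set A' : E' →ₗ[ℝ] E := -(LinearMap.adjoint A) with hA'
    have hadj : LinearMap.adjoint A' = -A := by
      rw [hA', map_neg, LinearMap.adjoint_adjoint]
    have bipK : dualCone (dualCone K) = K := bipolar' hK
    have bipC : dualCone (dualCone C) = C := bipolar' hC
    have hX' : Xfeas A' (dualCone C) (dualCone K) (-c) = Yfeas A K C c := by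
      ext y
      have harg : -c - A' y = LinearMap.adjoint A y - c := by
        rw [hA']; simp only [LinearMap.neg_apply]; abel
      simp only [Xfeas, Yfeas, Set.mem_setOf_eq, harg]
    have hY' : Yfeas A' (dualCone C) (dualCone K) (-b) = Xfeas A K C b := by
      ext z
      have harg : LinearMap.adjoint A' z - (-b) = b - A z := by
        rw [hadj]; simp only [LinearMap.neg_apply]; abel
      simp only [Yfeas, Xfeas, Set.mem_setOf_eq, harg, bipK, bipC]
    have hPflip : Pval A' (dualCone C) (dualCone K) (-c) (-b) = -(Dval A K C b c) := by
      rw [Pval, hX', Dval]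
      have hYc : (fun y => ⟪(-b : E'), y⟫) '' Yfeas A K C c
          = -((fun y => ⟪b, y⟫) '' Yfeas A K C c) := by
        ext t
        simp only [Set.mem_neg, Set.mem_image, inner_neg_left]
        constructor
        · rintro ⟨y, hy, rfl⟩; exact ⟨y, hy, by ring⟩
        · rintro ⟨y, hy, hyt⟩; exact ⟨y, hy, by linarith⟩
      rw [hYc, Real.sInf_def, neg_neg]
    have hDflip : Dval A' (dualCone C) (dualCone K) (-c) (-b) = -(Pval A K C b c) := by
      rw [Dval, hY', Pval]
      have hXc : (fun z => ⟪(-c : E), z⟫) '' Xfeas A K C b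
          = -((fun z => ⟪c, z⟫) '' Xfeas A K C b) := by
        ext t
        simp only [Set.mem_neg, Set.mem_image, inner_neg_left]
        constructor
        · rintro ⟨z, hz, rfl⟩; exact ⟨z, hz, by ring⟩
        · rintro ⟨z, hz, hzt⟩; exact ⟨z, hz, by linarith⟩
      rw [hXc, Real.sInf_def, neg_neg]
    have hclflip : IsClosed {p : E' × ℝ | ∃ y ∈ dualCone (dualCone C), ∃ w ∈ dualCone (dualCone K),
        p = (LinearMap.adjoint A' y - w, ⟪(-c : E), y⟫)} := by
      have hset : {p : E' × ℝ | ∃ y ∈ dualCone (dualCone C), ∃ w ∈ dualCone (dualCone K),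
          p = (LinearMap.adjoint A' y - w, ⟪(-c : E), y⟫)}
          = Neg.neg ⁻¹' {p : E' × ℝ | ∃ x ∈ C, ∃ s ∈ K, p = (A x + s, ⟪c, x⟫)} := by
        ext p
        simp only [Set.mem_preimage, Set.mem_setOf_eq, bipK, bipC, hadj,
          LinearMap.neg_apply, inner_neg_left]
        constructor
        · rintro ⟨y, hy, w, hw, rfl⟩
          refine ⟨y, hy, w, hw, ?_⟩
          rw [Prod.neg_mk, Prod.mk.injEq]
          constructor
          · abel
          · ring
        · rintro ⟨y, hy, w, hw, hp⟩
          refine ⟨y, hy, w, hw, ?_⟩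
          have : p = -(A y + w, ⟪c, y⟫) := by rw [← hp, neg_neg]
          rw [this, Prod.neg_mk, Prod.mk.injEq]
          constructor
          · abel
          · ring
      rw [hset]
      exact hcl.preimage continuous_neg
    obtain ⟨h1, h2⟩ := core A' (dualCone C) (dualCone K)
      (isClosedConvexCone_dualCone C) (isClosedConvexCone_dualCone K) (-c) (-b)
      (by rw [hX']; exact hYne) (by rw [hY']; exact hXne) hclflip
    obtain ⟨xstar, hxstar, hxval⟩ := h1
    rw [hY'] at hxstar
    rw [hDflip] at hxval
    rw [hPflip, hDflip] at h2
    constructor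
    · refine ⟨xstar, hxstar, ?_⟩
      rw [inner_neg_left] at hxval
      linarith
    · linarith
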